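/- Let μ₀ be a full-support point of the simplex Δ ⊂ ℝ^N and R = (√N/√(N−1)) · minⱼ μ₀(j). Let {αᵢ}_{i≤I} be positive weights summing to 1 and {μᵢ'}_{i≤I} ⊂ Δ arbitrary posteriors. Set r = ∑ᵢ αᵢ μᵢ' − μ₀ and, if r ≠ 0, μ_corr = μ₀ − (R/‖r‖₂)·r. Then μ_corr ∈ Δ, and the collection consisting of posteriors {μᵢ'} with weights (R/(R+‖r‖₂))·αᵢ together with μ_corr with weight ‖r‖₂/(R+‖r‖₂) forms a valid splitting of μ₀: the weights are nonnegative, sum to 1, and the weighted average of the posteriors equals μ₀. -/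

import Mathlib

/-- The adjustment construction: the correcting posterior `μ_corr` lies in the simplex and,
together with the rescaled weights, yields a valid splitting of the prior `μ₀`. -/
theorem stmt2 (N I : ℕ) (hN : 2 ≤ N) (μ₀ : EuclideanSpace ℝ (Fin N))
    (hpos : ∀ j, 0 < μ₀ j) (hsum : ∑ j, μ₀ j = 1)
    (m : ℝ) (hm : ∀ j, m ≤ μ₀ j) (hm' : ∃ j, μ₀ j = m)
    (R : ℝ) (hR : R = Real.sqrt N / Real.sqrt (N - 1) * m)
    (α : Fin I → ℝ) (hα : ∀ i, 0 < α i) (hαsum : ∑ i, α i = 1)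
    (μ' : Fin I → EuclideanSpace ℝ (Fin N))
    (hμ' : ∀ i, (∀ j, 0 ≤ μ' i j) ∧ ∑ j, μ' i j = 1)
    (r : EuclideanSpace ℝ (Fin N)) (hr : r = ∑ i, α i • μ' i - μ₀) (hr0 : r ≠ 0)
    (μc : EuclideanSpace ℝ (Fin N)) (hμc : μc = μ₀ - (R / ‖r‖) • r) :
    ((∀ j, 0 ≤ μc j) ∧ ∑ j, μc j = 1) ∧
    (∀ i, 0 ≤ R / (R + ‖r‖) * α i) ∧ 0 ≤ ‖r‖ / (R + ‖r‖) ∧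
    (∑ i, R / (R + ‖r‖) * α i) + ‖r‖ / (R + ‖r‖) = 1 ∧
    (∑ i, (R / (R + ‖r‖) * α i) • μ' i) + (‖r‖ / (R + ‖r‖)) • μc = μ₀ := by
  have sumApply : ∀ (v : Fin I → EuclideanSpace ℝ (Fin N)) (j : Fin N),
      (∑ i, v i) j = ∑ i, v i j := fun v j => by
        rw [WithLp.ofLp_sum]; exact Finset.sum_apply j _ _
  have hNR : (2:ℝ) ≤ (N:ℝ) := by exact_mod_cast hN
  have hN1 : (0:ℝ) < (N:ℝ) - 1 := by linarith
  have hN0 : (0:ℝ) < (N:ℝ) := by linarith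
  have hmpos : 0 < m := by obtain ⟨j, hj⟩ := hm'; rw [← hj]; exact hpos j
  have hsN : 0 < Real.sqrt N := Real.sqrt_pos.2 hN0
  have hsN1 : 0 < Real.sqrt ((N:ℝ) - 1) := Real.sqrt_pos.2 hN1
  have hRpos : 0 < R := by rw [hR]; positivity
  have hnr : 0 < ‖r‖ := norm_pos_iff.2 hr0
  -- pointwise formula for r
  have hrj : ∀ j, r j = (∑ i, α i * μ' i j) - μ₀ j := by
    intro j
    rw [hr]
    show (∑ i, α i • μ' i) j - μ₀ j = _
    rw [sumApply]
    simp
  have hrsum : ∑ j, r j = 0 := by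
    have : ∑ j, r j = (∑ j, ∑ i, α i * μ' i j) - ∑ j, μ₀ j := by
      rw [← Finset.sum_sub_distrib]
      exact Finset.sum_congr rfl fun j _ => hrj j
    rw [this, Finset.sum_comm, hsum]
    have : ∀ i ∈ Finset.univ, ∑ j, α i * μ' i j = α i := by
      intro i _
      rw [← Finset.mul_sum, (hμ' i).2, mul_one]
    rw [Finset.sum_congr rfl this, hαsum]
    ring
  have hnorm2 : ‖r‖ ^ 2 = ∑ j, r j ^ 2 := by
    rw [EuclideanSpace.norm_eq, Real.sq_sqrt (by positivity)]
    exact Finset.sum_congr rfl fun j _ => by rw [Real.norm_eq_abs, sq_abs]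
  -- key bound: r j ≤ √((N-1)/N) * ‖r‖
  have key : ∀ j, r j ≤ Real.sqrt (((N:ℝ) - 1)/N) * ‖r‖ := by
    intro j
    have hrep : r j = ∑ k, r k * ((if k = j then 1 else 0) - 1/(N:ℝ)) := by
      have : ∑ k, r k * ((if k = j then 1 else 0) - 1/(N:ℝ))
          = (∑ k, r k * (if k = j then 1 else 0)) - (1/(N:ℝ)) * ∑ k, r k := by
        rw [Finset.mul_sum, ← Finset.sum_sub_distrib]
        exact Finset.sum_congr rfl fun k _ => by ring
      rw [this, hrsum]
      simp [Finset.sum_ite_eq']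
    have hg : ∑ k : Fin N, ((if k = j then 1 else 0) - 1/(N:ℝ))^2 = ((N:ℝ) - 1)/N := by
      have expand : ∀ k : Fin N, ((if k = j then 1 else 0) - 1/(N:ℝ))^2
          = (if k = j then 1 else 0) - (2/(N:ℝ)) * (if k = j then 1 else 0) + 1/(N:ℝ)^2 := by
        intro k; by_cases h : k = j <;> simp [h] <;> ring
      rw [Finset.sum_congr rfl fun k _ => expand k]
      rw [Finset.sum_add_distrib, Finset.sum_sub_distrib, ← Finset.mul_sum]
      simp [Finset.sum_ite_eq', Finset.card_univ]
      field_simp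
      ring
    have cs := Finset.sum_mul_sq_le_sq_mul_sq Finset.univ (fun k => r k)
      (fun k => (if k = j then 1 else 0) - 1/(N:ℝ))
    rw [← hrep, hg, ← hnorm2] at cs
    calc r j ≤ |r j| := le_abs_self _
      _ = Real.sqrt ((r j)^2) := (Real.sqrt_sq_eq_abs _).symm
      _ ≤ Real.sqrt (‖r‖^2 * (((N:ℝ) - 1)/N)) := Real.sqrt_le_sqrt cs
      _ = Real.sqrt (((N:ℝ) - 1)/N) * ‖r‖ := by
          rw [Real.sqrt_mul (by positivity), Real.sqrt_sq (norm_nonneg _)]; ring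
  have hsdiv : Real.sqrt (((N:ℝ) - 1)/N) = Real.sqrt ((N:ℝ) - 1) / Real.sqrt N :=
    Real.sqrt_div (le_of_lt hN1) _
  have hRval : R * Real.sqrt (((N:ℝ) - 1)/N) = m := by
    rw [hR, hsdiv]
    field_simp
  have hμcj : ∀ j, μc j = μ₀ j - R / ‖r‖ * r j := by
    intro j; rw [hμc]; simp
  have hμcpos : ∀ j, 0 ≤ μc j := by
    intro j
    rw [hμcj]
    have h1 : R / ‖r‖ * r j ≤ R / ‖r‖ * (Real.sqrt (((N:ℝ) - 1)/N) * ‖r‖) :=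
      mul_le_mul_of_nonneg_left (key j) (by positivity)
    have h2 : R / ‖r‖ * (Real.sqrt (((N:ℝ) - 1)/N) * ‖r‖) = m := by
      rw [div_mul_eq_mul_div, ← mul_assoc, hRval, mul_div_assoc,
        div_self hnr.ne', mul_one]
    nlinarith [hm j]
  have hμcsum : ∑ j, μc j = 1 := by
    have : ∑ j, μc j = ∑ j, μ₀ j - R / ‖r‖ * ∑ j, r j := by
      rw [Finset.mul_sum, ← Finset.sum_sub_distrib]
      exact Finset.sum_congr rfl fun j _ => hμcj j
    rw [this, hsum, hrsum]; ring
  have hden : 0 < R + ‖r‖ := by positivity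
  refine ⟨⟨hμcpos, hμcsum⟩, ?_, by positivity, ?_, ?_⟩
  · intro i; have := (hα i).le; positivity
  · rw [← Finset.mul_sum, hαsum]; field_simp
  · ext j
    have lhs : ((∑ i, (R / (R + ‖r‖) * α i) • μ' i) + (‖r‖ / (R + ‖r‖)) • μc) j
        = (∑ i, R / (R + ‖r‖) * α i * μ' i j) + ‖r‖ / (R + ‖r‖) * μc j := by
      show (∑ i, (R / (R + ‖r‖) * α i) • μ' i) j + (‖r‖ / (R + ‖r‖)) * μc j = _
      rw [sumApply]
      norm_num
    rw [lhs, hμcj]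
    have hsm : ∑ i, R / (R + ‖r‖) * α i * μ' i j
        = R / (R + ‖r‖) * (μ₀ j + r j) := by
      simp only [mul_assoc]
      rw [← Finset.mul_sum]
      congr 1
      have := hrj j
      linarith
    rw [hsm]
    field_simp
    ring
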